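/- Let A, B, C be nonnegative reals with A + B + C = 1, and define χ_y = −A·log₂A − B·log₂B + (A+B)·log₂(A+B) and χ_r = −A·log₂A − C·log₂C + (A+C)·log₂(A+C) (with 0·log₂0 = 0). If δ = 1 − χ_r satisfies 0 ≤ δ < 1/2, then χ_y ≤ h(δ), where h(δ) = −(1−δ)·log₂(1−δ) − δ·log₂δ. -/

import Mathlib

open Real

/-- Convexity step: if `0 ≤ A ≤ x, y` and `x + y = 1 + A`, then
`x log x + y log y ≤ A log A`. -/
lemma convex_step (A x y : ℝ) (hA : 0 ≤ A) (hx : A ≤ x) (hy : A ≤ y)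
    (hxy : x + y = 1 + A) :
    x * Real.log x + y * Real.log y ≤ A * Real.log A := by
  have hx1 : x ≤ 1 := by linarith
  have hy1 : y ≤ 1 := by linarith
  rcases eq_or_lt_of_le (le_trans hx hx1 : A ≤ 1) with hA1 | hA1
  · have hxe : x = 1 := le_antisymm hx1 (hA1 ▸ hx)
    have hye : y = 1 := le_antisymm hy1 (hA1 ▸ hy)
    simp [hxe, hye, hA1]
  · set l : ℝ := (1 - x) / (1 - A) with hl
    have h1A : 0 < 1 - A := by linarith
    have hl0 : 0 ≤ l := div_nonneg (by linarith) h1A.le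
    have hl1 : l ≤ 1 := by
      rw [hl, div_le_one h1A]; linarith
    have hle : l * (1 - A) = 1 - x := by
      rw [hl]; field_simp
    have hxe : x = l * A + (1 - l) := by linear_combination hle
    have hye : y = (1 - l) * A + l := by linear_combination hxy - hle
    have hmem1 : (1 : ℝ) ∈ Set.Ici (0 : ℝ) := by norm_num
    have hmemA : A ∈ Set.Ici (0 : ℝ) := hA
    have c1 : (l * A + (1 - l)) * Real.log (l * A + (1 - l))
        ≤ l * (A * Real.log A) + (1 - l) * Real.log 1 := by
      have := Real.convexOn_mul_log.2 hmemA hmem1 hl0 (by linarith : (0:ℝ) ≤ 1 - l)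
        (by ring : l + (1 - l) = 1)
      simpa [smul_eq_mul] using this
    have c2 : ((1 - l) * A + l) * Real.log ((1 - l) * A + l)
        ≤ (1 - l) * (A * Real.log A) + l * Real.log 1 := by
      have := Real.convexOn_mul_log.2 hmemA hmem1 (by linarith : (0:ℝ) ≤ 1 - l) hl0
        (by ring : (1 - l) + l = 1)
      simpa [smul_eq_mul] using this
    simp only [Real.log_one, mul_zero, mul_one, add_zero] at c1 c2
    rw [hxe, hye]
    nlinarith [c1, c2]

/-- Grouping identity: `s * binEntropy (a/s) = -a log a - c log c + s log s` for `s = a + c`. -/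
lemma group_le (a c : ℝ) (ha : 0 ≤ a) (hc : 0 ≤ c) :
    -(a * Real.log a) - c * Real.log c + (a + c) * Real.log (a + c)
      ≤ (a + c) * Real.log 2 := by
  rcases eq_or_lt_of_le (by linarith : (0:ℝ) ≤ a + c) with hs | hs
  · have ha0 : a = 0 := by linarith
    have hc0 : c = 0 := by linarith
    simp [ha0, hc0]
  · have key : -(a * Real.log a) - c * Real.log c + (a + c) * Real.log (a + c)
        = (a + c) * Real.binEntropy (a / (a + c)) := by
      rw [Real.binEntropy_eq_negMulLog_add_negMulLog_one_sub]
      have h1 : 1 - a / (a + c) = c / (a + c) := by field_simp; ring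
      rw [h1, Real.negMulLog, Real.negMulLog]
      have la : a * Real.log (a / (a + c)) = a * Real.log a - a * Real.log (a + c) := by
        rcases eq_or_lt_of_le ha with h | h
        · simp [← h]
        · rw [Real.log_div h.ne' hs.ne']; ring
      have lc : c * Real.log (c / (a + c)) = c * Real.log c - c * Real.log (a + c) := by
        rcases eq_or_lt_of_le hc with h | h
        · simp [← h]
        · rw [Real.log_div h.ne' hs.ne']; ring
      field_simp
      nlinarith [la, lc]
    rw [key]
    exact mul_le_mul_of_nonneg_left Real.binEntropy_le_log_two hs.le

theorem stmt_5 (A B C : ℝ) (hA : 0 ≤ A) (hB : 0 ≤ B) (hC : 0 ≤ C)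
    (hsum : A + B + C = 1)
    (χy χr : ℝ)
    (hχy : χy = -(A * Real.logb 2 A) - B * Real.logb 2 B
        + (A + B) * Real.logb 2 (A + B))
    (hχr : χr = -(A * Real.logb 2 A) - C * Real.logb 2 C
        + (A + C) * Real.logb 2 (A + C))
    (δ : ℝ) (hδ : δ = 1 - χr) (hδ0 : 0 ≤ δ) (hδ1 : δ < 1 / 2) :
    χy ≤ -((1 - δ) * Real.logb 2 (1 - δ)) - δ * Real.logb 2 δ := by
  have hlog2 : (0:ℝ) < Real.log 2 := Real.log_pos (by norm_num)
  -- Step 2: B ≤ δ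
  have hBδ : B ≤ δ := by
    have h2 := group_le A C hA hC
    have hχr' : χr * Real.log 2
        = -(A * Real.log A) - C * Real.log C + (A + C) * Real.log (A + C) := by
      rw [hχr]; simp [Real.logb, div_eq_mul_inv]; field_simp
    have : χr * Real.log 2 ≤ (A + C) * Real.log 2 := by rw [hχr']; exact h2
    have hχrAC : χr ≤ A + C := le_of_mul_le_mul_right (by linarith) hlog2
    linarith [hχrAC]
  -- Step 1: χy * log 2 ≤ binEntropy B
  have hχyB : χy * Real.log 2 ≤ Real.binEntropy B := by
    have hχy' : χy * Real.log 2
        = -(A * Real.log A) - B * Real.log B + (A + B) * Real.log (A + B) := by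
      rw [hχy]; simp [Real.logb, div_eq_mul_inv]; field_simp
    have hbe : Real.binEntropy B = -(B * Real.log B) - (A + C) * Real.log (A + C) := by
      rw [Real.binEntropy_eq_negMulLog_add_negMulLog_one_sub, Real.negMulLog, Real.negMulLog]
      have : 1 - B = A + C := by linarith
      rw [this]; ring
    have hcs := convex_step A (A + B) (A + C) hA (by linarith) (by linarith) (by linarith)
    rw [hχy', hbe]
    linarith
  -- Step 3: binEntropy B ≤ binEntropy δ
  have hmono : Real.binEntropy B ≤ Real.binEntropy δ := by
    rcases eq_or_lt_of_le hBδ with h | h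
    · rw [h]
    · have h2 : (2:ℝ)⁻¹ = 1/2 := by norm_num
      exact (Real.binEntropy_strictMonoOn ⟨hB, by rw [h2]; linarith⟩
        ⟨hδ0, by rw [h2]; linarith⟩ h).le
  -- Finish
  have hrhs : -((1 - δ) * Real.logb 2 (1 - δ)) - δ * Real.logb 2 δ
      = Real.binEntropy δ / Real.log 2 := by
    rw [Real.binEntropy_eq_negMulLog_add_negMulLog_one_sub, Real.negMulLog, Real.negMulLog]
    simp [Real.logb]
    field_simp
    ring
  rw [hrhs, le_div_iff₀ hlog2]
  linarith
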